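/- arXiv:1907.04910 — 2 statements merged into one kernel-verified Lean document; each statement's English description precedes it below -/
import Mathlib

section
/- Let Y/X be an abelian cover of multigraphs with automorphism group G. For every non-trivial character χ of G, the leading Taylor coefficient of L_{Y/X}(u,χ)^{-1} at u = 1 is L*_{Y/X}(1,χ) = (−2)^{r_X−1} · det(D − A_χ), where D is the degree matrix of X and r_X = |E_X| − |V_X| + 1. -/
/-!  Multigraphs in the Serre formalism: a finite vertex set `V`, a finite set
`D` of darts (oriented edges / half-edges) together with a fixed-point-free
involution `inv` (reversing orientation) and a map `head` assigning to each
dart its terminal vertex.  Edges are the orbits of `inv`; loops and multiple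
edges are allowed.  -/
structure Multigraph where
  V : Type
  D : Type
  [fintypeV : Fintype V]
  [fintypeD : Fintype D]
  [decEqV : DecidableEq V]
  [decEqD : DecidableEq D]
  inv : D → D
  head : D → V
  inv_inv : ∀ d, inv (inv d) = d
  inv_ne : ∀ d, inv d ≠ d

namespace Multigraph

attribute [instance] Multigraph.fintypeV Multigraph.fintypeD Multigraph.decEqV Multigraph.decEqD

variable (Z : Multigraph)

/-- the initial vertex of a dart -/
def tail (d : Z.D) : Z.V := Z.head (Z.inv d)

/-- the number of edges `|E|`: each edge consists of exactly two darts -/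
def numEdges : ℕ := Fintype.card Z.D / 2

/-- the degree (valency) of a vertex: the number of darts with head `v`;
loops automatically count twice -/
def degree (v : Z.V) : ℕ := (Finset.univ.filter fun d : Z.D => Z.head d = v).card

/-- the number of darts with tail `v` and head `w`.  For `v ≠ w` this is the
number of edges joining `v` and `w`; for `v = w` it is twice the number of
loops at `v`. -/
def numDarts (v w : Z.V) : ℕ :=
  (Finset.univ.filter fun d : Z.D => Z.tail d = v ∧ Z.head d = w).card

/-- the number of loops at a vertex -/
def numLoops (v : Z.V) : ℕ := Z.numDarts v v / 2

/-- the number of edges between two (distinct) vertices -/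
def numEdgesBetween (v w : Z.V) : ℕ := Z.numDarts v w

def Adj (v w : Z.V) : Prop := ∃ d : Z.D, Z.tail d = v ∧ Z.head d = w

/-- a multigraph is connected if it is nonempty and any two vertices are
joined by a path -/
def Connected : Prop := Nonempty Z.V ∧ ∀ v w : Z.V, Relation.ReflTransGen Z.Adj v w

/-- no vertices of degree one -/
def NoDegreeOne : Prop := ∀ v : Z.V, Z.degree v ≠ 1

/-- adjacency using only darts from `T` -/
def AdjOn (T : Finset Z.D) (v w : Z.V) : Prop := ∃ d ∈ T, Z.tail d = v ∧ Z.head d = w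

/-- A spanning tree, described by its (inv-closed) set of darts: it is
connected, spans all vertices, and has `|V| - 1` edges (i.e. `2(|V|-1)`
darts); a connected spanning subgraph with `|V| - 1` edges is exactly a
spanning tree. -/
def IsSpanningTree (T : Finset Z.D) : Prop :=
  (∀ d ∈ T, Z.inv d ∈ T) ∧ (∀ v w : Z.V, Relation.ReflTransGen (Z.AdjOn T) v w) ∧
    T.card = 2 * (Fintype.card Z.V - 1)

/-- `κ_Z`, the number of spanning trees of `Z` -/
noncomputable def kappa : ℕ := Nat.card {T : Finset Z.D // Z.IsSpanningTree T}

/-- the adjacency matrix: the diagonal entry at `v` is twice the number of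
loops at `v`, the off-diagonal entry at `(v, w)` is the number of edges
joining `v` and `w` -/
def adjMatrix : Matrix Z.V Z.V ℤ := Matrix.of fun v w => (Z.numDarts v w : ℤ)

/-- the diagonal degree matrix -/
def degMatrix : Matrix Z.V Z.V ℤ := Matrix.diagonal fun v => (Z.degree v : ℤ)

/-- `r_Z = |E_Z| - |V_Z| + 1` -/
def r : ℕ := Z.numEdges + 1 - Fintype.card Z.V

/-- the reciprocal `ζ_Z(u)⁻¹` of the Ihara zeta function, defined through the
three-term determinant formula
`ζ_Z(u)⁻¹ = (1 - u²)^(r-1) · det (I - A u + (D - I) u²)`;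
it is a polynomial in `u`. -/
noncomputable def zetaInv : Polynomial ℚ :=
  (1 - Polynomial.X ^ 2) ^ (Z.r - 1) *
    Matrix.det
      ((1 : Matrix Z.V Z.V (Polynomial ℚ)) -
        (Polynomial.X : Polynomial ℚ) • Z.adjMatrix.map (fun a => (a : Polynomial ℚ)) +
        ((Polynomial.X : Polynomial ℚ) ^ 2) • (Z.degMatrix - 1).map (fun a => (a : Polynomial ℚ)))

/-- `ρ_w(w₀)`: the Laplacian entries -/
def rho (w w0 : Z.V) : ℤ :=
  if w = w0 then (Z.degree w0 : ℤ) - 2 * (Z.numLoops w0 : ℤ)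
  else -(Z.numEdgesBetween w w0 : ℤ)

/-- the divisor `φ(w₀) = ∑_w ρ_w(w₀) · w` -/
noncomputable def lapDiv (w0 : Z.V) : Z.V →₀ ℤ :=
  ∑ w : Z.V, Finsupp.single w (Z.rho w w0)

/-- the Laplacian map `φ : Div(Z) → Div(Z)`, on `Div(Z) = Z.V →₀ ℤ`,
sending `w₀` to `∑_w ρ_w(w₀) · w` -/
noncomputable def lap : (Z.V →₀ ℤ) →ₗ[ℤ] Z.V →₀ ℤ :=
  Finsupp.lsum ℤ fun w0 => LinearMap.toSpanSingleton ℤ _ (Z.lapDiv w0)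

/-- the degree map `deg : Div(Z) → ℤ` -/
noncomputable def divDeg : (Z.V →₀ ℤ) →ₗ[ℤ] ℤ :=
  Finsupp.lsum ℤ fun _ => (LinearMap.id : ℤ →ₗ[ℤ] ℤ)

/-- `Div⁰(Z)`, the divisors of degree zero -/
noncomputable def divZero : Submodule ℤ (Z.V →₀ ℤ) := LinearMap.ker Z.divDeg

/-- `Pr(Z)`, the principal divisors: the image of the Laplacian map -/
noncomputable def prin : Submodule ℤ (Z.V →₀ ℤ) := LinearMap.range Z.lap

end Multigraph

/-- A covering map of multigraphs: maps on vertices and darts commuting with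
the structure maps which are local isomorphisms (bijections on stars). -/
structure CoveringMap (Y X : Multigraph) where
  vmap : Y.V → X.V
  dmap : Y.D → X.D
  head_map : ∀ d, X.head (dmap d) = vmap (Y.head d)
  inv_map : ∀ d, X.inv (dmap d) = dmap (Y.inv d)
  vmap_surj : Function.Surjective vmap
  star_bij : ∀ w : Y.V, Set.BijOn dmap {d | Y.head d = w} {d | X.head d = vmap w}

/-- A Galois (regular) cover of multigraphs `Y/X` with automorphism group `G`:
a covering map together with an action of `G` on `Y` by automorphisms of the
cover which is free and transitive on each vertex fiber (so `G` is identified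
with the deck transformation group `Aut(Y/X)`). -/
structure GaloisCover (Y X : Multigraph) (G : Type) [Group G] extends CoveringMap Y X where
  actV : G →* Equiv.Perm Y.V
  actD : G →* Equiv.Perm Y.D
  act_head : ∀ g d, Y.head (actD g d) = actV g (Y.head d)
  act_inv : ∀ g d, Y.inv (actD g d) = actD g (Y.inv d)
  vmap_act : ∀ g w, vmap (actV g w) = vmap w
  dmap_act : ∀ g d, dmap (actD g d) = dmap d
  act_free : ∀ g w, actV g w = w → g = 1
  fiber_trans : ∀ w w' : Y.V, vmap w = vmap w' → ∃ g : G, actV g w = w'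

/-- the first non-vanishing Taylor coefficient of a polynomial `p` at `u = 1` -/
noncomputable def leadingCoeffAtOne {K : Type} [Field K] (p : Polynomial K) : K :=
  (Polynomial.taylor 1 p).coeff (p.rootMultiplicity 1)

/-- the idempotent `e_χ = |G|⁻¹ ∑_σ χ(σ) σ⁻¹` of `ℂ[G]` attached to a
character `χ` of a finite abelian group `G` -/
noncomputable def charIdem {G : Type} [CommGroup G] [Fintype G] (χ : G →* ℂ) :
    MonoidAlgebra ℂ G :=
  (Fintype.card G : ℂ)⁻¹ • ∑ σ : G, χ σ • MonoidAlgebra.single σ⁻¹ (1 : ℂ)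

/-- the complex-conjugate character `χ̄` -/
noncomputable def conjChar {G : Type} [CommGroup G] (χ : G →* ℂ) : G →* ℂ :=
  (starRingEnd ℂ).toMonoidHom.comp χ

/-- `e = 1 - e_{χ₁}` where `χ₁` is the trivial character -/
noncomputable def eAug (G : Type) [CommGroup G] [Fintype G] : MonoidAlgebra ℂ G :=
  1 - charIdem (1 : G →* ℂ)

/-- the augmentation ideal `I_G = ker(s : ℤ[G] → ℤ)`, as an additive
subgroup of `ℤ[G]` -/
noncomputable def augIdeal (G : Type) [CommGroup G] : AddSubgroup (MonoidAlgebra ℤ G) :=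
  AddMonoidHom.ker
    (((Finsupp.lsum ℤ fun _ : G => (LinearMap.id : ℤ →ₗ[ℤ] ℤ)).toAddMonoidHom.comp
      MonoidAlgebra.coeffAddEquiv.toAddMonoidHom :
      MonoidAlgebra ℤ G →+ ℤ))

namespace GaloisCover

variable {Y X : Multigraph} {G : Type} [CommGroup G] [Fintype G] (C : GaloisCover Y X G)

/-- the matrix `A(σ)`, relative to a choice `s` of one vertex `s v` of `Y` in
the fiber of each vertex `v` of `X`: its `(v, v')` entry is twice the number
of loops at `s v` when `v = v'` and `σ = 1`, and otherwise the number of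
edges connecting `s v` to `σ · s v'`. -/
noncomputable def Asigma (s : X.V → Y.V) (σ : G) : Matrix X.V X.V ℤ :=
  Matrix.of fun v v' => (Y.numDarts (s v) (C.actV σ (s v')) : ℤ)

/-- `A_χ = ∑_σ χ(σ) A(σ)` -/
noncomputable def Achi (s : X.V → Y.V) (χ : G →* ℂ) : Matrix X.V X.V ℂ :=
  ∑ σ : G, χ σ • (C.Asigma s σ).map fun a => (a : ℂ)

/-- the reciprocal `L_{Y/X}(u,χ)⁻¹` of the Artin-Ihara L-function, defined
through the three-term determinant formula
`L_{Y/X}(u,χ)⁻¹ = (1 - u²)^(r_X - 1) · det (I - A_χ u + (D - I) u²)`. -/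
noncomputable def LInv (s : X.V → Y.V) (χ : G →* ℂ) : Polynomial ℂ :=
  (1 - Polynomial.X ^ 2) ^ (X.r - 1) *
    Matrix.det
      ((1 : Matrix X.V X.V (Polynomial ℂ)) -
        (Polynomial.X : Polynomial ℂ) • (C.Achi s χ).map Polynomial.C +
        ((Polynomial.X : Polynomial ℂ) ^ 2) • (X.degMatrix - 1).map fun a => (a : Polynomial ℂ))

/-- `θ*_{Y/X}(1) = ∑_χ L*_{Y/X}(1,χ) e_{χ̄} ∈ ℂ[G]` (a finite sum over all
the characters of `G`) -/
noncomputable def thetaStar (s : X.V → Y.V) : MonoidAlgebra ℂ G :=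
  ∑ᶠ χ : G →* ℂ, leadingCoeffAtOne (C.LInv s χ) • charIdem (conjChar χ)

/-- `ℓ_{w_i} : Div(Y) → ℤ[G]`, on a vertex `w`: `∑_σ ρ_{w_i}(σ·w) σ⁻¹`
(here `w_i = s v`) -/
noncomputable def ell (s : X.V → Y.V) (v : X.V) (w : Y.V) : MonoidAlgebra ℤ G :=
  ∑ σ : G, Y.rho (s v) (C.actV σ w) • MonoidAlgebra.single (σ⁻¹ : G) (1 : ℤ)

/-- the `ℤ[G]`-linear extension of `ell` to `Div(Y)` -/
noncomputable def ellD (s : X.V → Y.V) (v : X.V) (Dv : Y.V →₀ ℤ) : MonoidAlgebra ℤ G :=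
  Finsupp.sum Dv fun w c => c • C.ell s v w

/-- `det_{ℤ[G]}(φ)`: the determinant of the `ℤ[G]`-linear Laplacian `φ` on the
free `ℤ[G]`-module `Div(Y) = ⊕ᵢ ℤ[G]·wᵢ`, computed in the basis `(wᵢ)ᵢ`,
i.e. the determinant of the matrix `(ℓ_{w_i}(w_j))_{i,j}`. -/
noncomputable def lapDet (s : X.V → Y.V) : MonoidAlgebra ℤ G :=
  Matrix.det (Matrix.of fun v v' => C.ell s v (s v'))

/-- the action of an element of `ℤ[G]` on `Div(Y)` -/
noncomputable def smulDiv (x : MonoidAlgebra ℤ G) (Dv : Y.V →₀ ℤ) : Y.V →₀ ℤ :=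
  Finsupp.sum x.coeff fun σ c => c • Finsupp.mapDomain (C.actV σ) Dv

/-- the action of an element of `ℂ[G]` on `Div(Y) ⊗ ℂ` -/
noncomputable def smulDivC (x : MonoidAlgebra ℂ G) (Dv : Y.V →₀ ℂ) : Y.V →₀ ℂ :=
  Finsupp.sum x.coeff fun σ c => c • Finsupp.mapDomain (C.actV σ) Dv

/-- `res : Div(Y) → Div(X)`, sending a vertex `w` to `π(w)` -/
noncomputable def res (Dv : Y.V →₀ ℤ) : X.V →₀ ℤ := Finsupp.mapDomain C.vmap Dv

/-- `cor : Div(X) → Div(Y)`, sending a vertex `v` to `∑_{w ∈ π⁻¹(v)} w` -/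
noncomputable def cor (Dv : X.V →₀ ℤ) : Y.V →₀ ℤ :=
  Finsupp.equivFunOnFinite.symm fun w => Dv (C.vmap w)

/-- the norm element `N_G = ∑_σ σ` acting on `Div(Y)` -/
noncomputable def normMap : (Y.V →₀ ℤ) →ₗ[ℤ] Y.V →₀ ℤ :=
  ∑ σ : G, Finsupp.lmapDomain ℤ ℤ (C.actV σ)

end GaloisCover

/-- An intermediate cover of a Galois cover `Y/X`, corresponding to a subgroup
`H ≤ G = Aut(Y/X)`: a multigraph `Z` (the quotient `Y/H`) which is at the
same time a Galois cover of which `Y` is a Galois `H`-cover (with the action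
of `H` being the restriction of that of `G`) and a cover of `X`, compatibly
with the covering `Y → X`. -/
structure IntermediateCover {Y X : Multigraph} {G : Type} [Group G]
    (C : GaloisCover Y X G) (H : Subgroup G) where
  Z : Multigraph
  upper : GaloisCover Y Z ↥H
  lower : CoveringMap Z X
  actV_compat : ∀ (h : ↥H) (w : Y.V), upper.actV h w = C.actV (h : G) w
  actD_compat : ∀ (h : ↥H) (d : Y.D), upper.actD h d = C.actD (h : G) d
  vmap_compat : ∀ w : Y.V, lower.vmap (upper.vmap w) = C.vmap w
  dmap_compat : ∀ d : Y.D, lower.dmap (upper.dmap d) = C.dmap d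

open Polynomial in
lemma lcao_mul_pow {K : Type} [Field K] (k : ℕ) (q : Polynomial K) (hq : q.eval 1 ≠ 0) :
    leadingCoeffAtOne ((X - 1) ^ k * q) = q.eval 1 := by
  have hX1 : (X - 1 : K[X]) = X - C 1 := by simp
  have hne : ((X - 1 : K[X]) ^ k * q) ≠ 0 := by
    refine mul_ne_zero (pow_ne_zero _ ?_) (fun h => hq (by simp [h]))
    rw [hX1]; exact X_sub_C_ne_zero 1
  unfold leadingCoeffAtOne
  rw [rootMultiplicity_mul hne, hX1, rootMultiplicity_X_sub_C_pow,
    rootMultiplicity_eq_zero (by simpa [IsRoot] using hq), add_zero]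
  rw [taylor_mul]
  have h1 : Polynomial.taylor (1:K) ((X - C 1) ^ k) = X ^ k := by
    rw [Polynomial.taylor_apply, pow_comp, sub_comp, X_comp, C_comp]; ring
  have h2 := Polynomial.coeff_X_pow_mul ((taylor (1:K)) q) k 0
  rw [zero_add] at h2
  rw [h1, h2, taylor_coeff_zero]

open Finset in
lemma Multigraph.sum_tail_fiber (Z : Multigraph) (h : Z.V → ℂ) (w : Z.V) :
    ∑ w' : Z.V, (Z.numDarts w w' : ℂ) * h w' =
      ∑ d ∈ Finset.univ.filter (fun d => Z.tail d = w), h (Z.head d) := by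
  rw [← Finset.sum_fiberwise_of_maps_to (g := Z.head) (t := Finset.univ)
      (fun x _ => Finset.mem_univ _)]
  refine Finset.sum_congr rfl fun w' _ => ?_
  rw [Finset.filter_filter]
  have : ∀ d ∈ Finset.univ.filter (fun d => Z.tail d = w ∧ Z.head d = w'),
      h (Z.head d) = h w' := by
    intro d hd
    rw [(Finset.mem_filter.1 hd).2.2]
  rw [Finset.sum_congr rfl this, Finset.sum_const, Multigraph.numDarts, nsmul_eq_mul]

lemma Multigraph.sum_head_fiber (Z : Multigraph) (u : Z.V → ℂ) :
    ∑ d : Z.D, u (Z.head d) = ∑ w : Z.V, (Z.degree w : ℂ) * u w := by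
  rw [← Finset.sum_fiberwise_of_maps_to (g := Z.head) (t := Finset.univ)
      (fun x _ => Finset.mem_univ _)]
  refine Finset.sum_congr rfl fun w _ => ?_
  have : ∀ d ∈ Finset.univ.filter (fun d => Z.head d = w), u (Z.head d) = u w := by
    intro d hd
    rw [(Finset.mem_filter.1 hd).2]
  rw [Finset.sum_congr rfl this, Finset.sum_const, Multigraph.degree, nsmul_eq_mul]

lemma Multigraph.sum_dart_fiber_tail (Z : Multigraph) (φ : Z.D → ℂ) :
    ∑ d : Z.D, φ d = ∑ w : Z.V, ∑ d ∈ Finset.univ.filter (fun d => Z.tail d = w), φ d :=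
  (Finset.sum_fiberwise_of_maps_to (g := Z.tail) (t := Finset.univ)
    (fun x _ => Finset.mem_univ _) φ).symm

lemma Multigraph.sum_swap_dart (Z : Multigraph) (k : Z.V → Z.V → ℂ) :
    ∑ d : Z.D, k (Z.head d) (Z.tail d) = ∑ d : Z.D, k (Z.tail d) (Z.head d) := by
  have hinv : Function.Involutive Z.inv := Z.inv_inv
  rw [← Equiv.sum_comp (Function.Involutive.toPerm Z.inv hinv) (fun d => k (Z.head d) (Z.tail d))]
  refine Finset.sum_congr rfl fun d _ => ?_
  have h1 : Z.head ((Function.Involutive.toPerm Z.inv hinv) d) = Z.tail d := rfl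
  have h2 : Z.tail ((Function.Involutive.toPerm Z.inv hinv) d) = Z.head d := by
    show Z.head (Z.inv (Z.inv d)) = Z.head d
    rw [Z.inv_inv]
  rw [h1, h2]

lemma CoveringMap.degree_vmap {Y X : Multigraph} (C : CoveringMap Y X) (w : Y.V) :
    Y.degree w = X.degree (C.vmap w) := by
  have e := Set.BijOn.equiv C.dmap (C.star_bij w)
  have h1 : Y.degree w = Fintype.card {d | Y.head d = w} := (Fintype.card_subtype _).symm
  have h2 : X.degree (C.vmap w) = Fintype.card {d | X.head d = C.vmap w} :=
    (Fintype.card_subtype _).symm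
  rw [h1, h2, Fintype.card_congr e]

namespace GaloisCover

variable {Y X : Multigraph} {G : Type} [CommGroup G] [Fintype G]

lemma act_tail (C : GaloisCover Y X G) (σ : G) (d : Y.D) :
    Y.tail (C.actD σ d) = C.actV σ (Y.tail d) := by
  show Y.head (Y.inv (C.actD σ d)) = C.actV σ (Y.head (Y.inv d))
  rw [C.act_inv, C.act_head]

lemma sum_tail_act (C : GaloisCover Y X G) (σ : G) (w : Y.V) (h : Y.D → ℂ) :
    ∑ d ∈ Finset.univ.filter (fun d => Y.tail d = C.actV σ w), h d =
      ∑ d ∈ Finset.univ.filter (fun d => Y.tail d = w), h (C.actD σ d) := by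
  refine (Finset.sum_equiv (C.actD σ) ?_ fun d _ => rfl).symm
  intro d
  simp only [Finset.mem_filter, Finset.mem_univ, true_and, C.act_tail]
  exact ⟨fun h' => by rw [h'], fun h' => (C.actV σ).injective h'⟩

lemma degree_act (C : GaloisCover Y X G) (σ : G) (w : Y.V) :
    Y.degree (C.actV σ w) = Y.degree w := by
  rw [C.toCoveringMap.degree_vmap, C.toCoveringMap.degree_vmap w, C.vmap_act]

theorem det_sub_ne_zero (C : GaloisCover Y X G) (hYconn : Y.Connected)
    (s : X.V → Y.V) (hs : ∀ v, C.vmap (s v) = v)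
    (χ : G →* ℂ) (hχ : χ ≠ 1) :
    (X.degMatrix.map (fun a => (a : ℂ)) - C.Achi s χ).det ≠ 0 := by
  set M := X.degMatrix.map (fun a => (a : ℂ)) - C.Achi s χ with hM
  intro hdet
  obtain ⟨f, hf0, hMf⟩ := Matrix.exists_mulVec_eq_zero_iff.2 hdet
  -- the section decomposition
  have hfib : ∀ w : Y.V, ∃ g : G, C.actV g (s (C.vmap w)) = w := by
    intro w
    exact C.fiber_trans _ _ (by rw [hs])
  choose g hg using hfib
  have huniq : ∀ (σ : G) (w : Y.V), C.actV σ (s (C.vmap w)) = w → σ = g w := by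
    intro σ w h
    have h2 : C.actV ((g w)⁻¹ * σ) (s (C.vmap w)) = s (C.vmap w) := by
      rw [map_mul, Equiv.Perm.mul_apply, h, map_inv, Equiv.Perm.inv_def,
        Equiv.symm_apply_eq, hg]
    have := C.act_free _ _ h2
    rwa [inv_mul_eq_one, eq_comm] at this
  set F : Y.V → ℂ := fun w => χ (g w) * f (C.vmap w) with hF
  have hgs : ∀ v : X.V, g (s v) = 1 := by
    intro v
    refine (huniq 1 (s v) ?_).symm
    rw [map_one, Equiv.Perm.one_apply, hs]
  have hFs : ∀ v : X.V, F (s v) = f v := by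
    intro v
    rw [hF]; simp only
    rw [hgs, map_one, one_mul, hs]
  have hgact : ∀ (σ : G) (w : Y.V), g (C.actV σ w) = σ * g w := by
    intro σ w
    refine (huniq (σ * g w) (C.actV σ w) ?_).symm
    rw [C.vmap_act, map_mul, Equiv.Perm.mul_apply, hg]
  have hFact : ∀ (σ : G) (w : Y.V), F (C.actV σ w) = χ σ * F w := by
    intro σ w
    rw [hF]; simp only
    rw [hgact, map_mul, C.vmap_act, mul_assoc]
  -- the Laplacian of Y applied to F
  set LF : Y.V → ℂ := fun w =>
    (Y.degree w : ℂ) * F w - ∑ d ∈ Finset.univ.filter (fun d => Y.tail d = w), F (Y.head d)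
    with hLF
  -- the vertex-fiber parametrization
  have e_bij : Function.Bijective (fun p : X.V × G => C.actV p.2 (s p.1)) := by
    constructor
    · rintro ⟨v, σ⟩ ⟨v', σ'⟩ h
      simp only at h
      have hv : v = v' := by
        have := congrArg C.vmap h
        rwa [C.vmap_act, C.vmap_act, hs, hs] at this
      subst hv
      have : σ'⁻¹ * σ = 1 := by
        refine C.act_free _ (s v) ?_
        rw [map_mul, Equiv.Perm.mul_apply, h, ← Equiv.Perm.mul_apply, ← map_mul,
          inv_mul_cancel, map_one, Equiv.Perm.one_apply]
      rw [inv_mul_eq_one] at this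
      exact Prod.ext rfl this.symm
    · intro w
      exact ⟨⟨C.vmap w, g w⟩, hg w⟩
  -- LF vanishes at the section points
  have hLFs : ∀ v : X.V, LF (s v) = M.mulVec f v := by
    intro v
    rw [hLF]; simp only
    rw [hM, Matrix.sub_mulVec, Pi.sub_apply]
    have hdeg : X.degMatrix.map (fun a => (a : ℂ)) = Matrix.diagonal (fun v => (X.degree v : ℂ)) := by
      rw [Multigraph.degMatrix, Matrix.diagonal_map (by simp)]
      rfl
    rw [hdeg, Matrix.mulVec_diagonal]
    have hdv : (X.degree v : ℂ) = (Y.degree (s v) : ℂ) := by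
      rw [C.toCoveringMap.degree_vmap (s v), hs]
    have hA : (C.Achi s χ).mulVec f v =
        ∑ d ∈ Finset.univ.filter (fun d => Y.tail d = s v), F (Y.head d) := by
      have hachi : ∀ v' : X.V, C.Achi s χ v v' = ∑ σ : G,
          χ σ * (Y.numDarts (s v) (C.actV σ (s v')) : ℂ) := by
        intro v'
        simp [GaloisCover.Achi, GaloisCover.Asigma, Matrix.sum_apply]
      calc (C.Achi s χ).mulVec f v = ∑ v' : X.V, C.Achi s χ v v' * f v' := by
              simp [Matrix.mulVec, dotProduct]
        _ = ∑ v' : X.V, ∑ σ : G,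
              (Y.numDarts (s v) (C.actV σ (s v')) : ℂ) * F (C.actV σ (s v')) := by
              refine Finset.sum_congr rfl fun v' _ => ?_
              rw [hachi, Finset.sum_mul]
              refine Finset.sum_congr rfl fun σ _ => ?_
              rw [hFact, hFs]
              ring
        _ = ∑ p : X.V × G,
              (Y.numDarts (s v) (C.actV p.2 (s p.1)) : ℂ) * F (C.actV p.2 (s p.1)) := by
              rw [Fintype.sum_prod_type]
        _ = ∑ w' : Y.V, (Y.numDarts (s v) w' : ℂ) * F w' :=
              Function.Bijective.sum_comp e_bij (fun w' => (Y.numDarts (s v) w' : ℂ) * F w')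
        _ = ∑ d ∈ Finset.univ.filter (fun d => Y.tail d = s v), F (Y.head d) :=
              Y.sum_tail_fiber F (s v)
    rw [hA, hFs, hdv]
  -- LF vanishes everywhere
  have hLF0 : ∀ w : Y.V, LF w = 0 := by
    intro w
    have h1 : LF w = χ (g w) * LF (s (C.vmap w)) := by
      conv_lhs => rw [← hg w]
      rw [hLF]; simp only
      rw [C.degree_act, hFact, C.sum_tail_act]
      have : ∀ d ∈ Finset.univ.filter (fun d => Y.tail d = s (C.vmap w)),
          F (Y.head (C.actD (g w) d)) = χ (g w) * F (Y.head d) := by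
        intro d _
        rw [C.act_head, hFact]
      rw [Finset.sum_congr rfl this, ← Finset.mul_sum]
      ring
    rw [h1, hLFs, hMf]
    simp
  -- the quadratic form identity
  have hqf : ∑ d : Y.D, (starRingEnd ℂ) (F (Y.head d) - F (Y.tail d)) *
      (F (Y.head d) - F (Y.tail d)) = 0 := by
    have hswap1 : ∑ d : Y.D, (starRingEnd ℂ) (F (Y.tail d)) * F (Y.tail d) =
        ∑ d : Y.D, (starRingEnd ℂ) (F (Y.head d)) * F (Y.head d) :=
      Y.sum_swap_dart (fun a b => (starRingEnd ℂ) (F b) * F b)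
    have hswap2 : ∑ d : Y.D, (starRingEnd ℂ) (F (Y.head d)) * F (Y.tail d) =
        ∑ d : Y.D, (starRingEnd ℂ) (F (Y.tail d)) * F (Y.head d) :=
      Y.sum_swap_dart (fun a b => (starRingEnd ℂ) (F a) * F b)
    have hhead : ∑ d : Y.D, (starRingEnd ℂ) (F (Y.head d)) * F (Y.head d) =
        ∑ w : Y.V, (Y.degree w : ℂ) * ((starRingEnd ℂ) (F w) * F w) :=
      Y.sum_head_fiber (fun w => (starRingEnd ℂ) (F w) * F w)
    have htail : ∑ d : Y.D, (starRingEnd ℂ) (F (Y.tail d)) * F (Y.head d) =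
        ∑ w : Y.V, (starRingEnd ℂ) (F w) *
          ∑ d ∈ Finset.univ.filter (fun d => Y.tail d = w), F (Y.head d) := by
      rw [Y.sum_dart_fiber_tail (fun d => (starRingEnd ℂ) (F (Y.tail d)) * F (Y.head d))]
      refine Finset.sum_congr rfl fun w _ => ?_
      rw [Finset.mul_sum]
      refine Finset.sum_congr rfl fun d hd => ?_
      rw [(Finset.mem_filter.1 hd).2]
    have expand : ∑ d : Y.D, (starRingEnd ℂ) (F (Y.head d) - F (Y.tail d)) *
        (F (Y.head d) - F (Y.tail d)) =
        ∑ d : Y.D, ((starRingEnd ℂ) (F (Y.head d)) * F (Y.head d)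
          + (starRingEnd ℂ) (F (Y.tail d)) * F (Y.tail d)
          - (starRingEnd ℂ) (F (Y.head d)) * F (Y.tail d)
          - (starRingEnd ℂ) (F (Y.tail d)) * F (Y.head d)) := by
      refine Finset.sum_congr rfl fun d _ => ?_
      rw [map_sub]
      ring
    rw [expand]
    simp only [Finset.sum_sub_distrib, Finset.sum_add_distrib]
    rw [hswap1, hswap2, hhead, htail]
    have : ∑ w : Y.V, (starRingEnd ℂ) (F w) * LF w = 0 := by
      refine Finset.sum_eq_zero fun w _ => ?_
      rw [hLF0, mul_zero]
    rw [hLF] at this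
    simp only [mul_sub] at this
    rw [Finset.sum_sub_distrib] at this
    have h2 : ∑ w : Y.V, (Y.degree w : ℂ) * ((starRingEnd ℂ) (F w) * F w) =
        ∑ w : Y.V, (starRingEnd ℂ) (F w) * ((Y.degree w : ℂ) * F w) := by
      refine Finset.sum_congr rfl fun w _ => ?_
      ring
    rw [h2]
    rw [sub_eq_zero] at this
    rw [this]
    ring
  -- hence F is constant along darts
  have hreal : ∀ d : Y.D, F (Y.head d) = F (Y.tail d) := by
    have hcast : ∑ d : Y.D, (Complex.normSq (F (Y.head d) - F (Y.tail d)) : ℝ) = 0 := by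
      have : ((∑ d : Y.D, (Complex.normSq (F (Y.head d) - F (Y.tail d)) : ℝ) : ℝ) : ℂ) = 0 := by
        push_cast
        rw [← hqf]
        refine Finset.sum_congr rfl fun d _ => ?_
        rw [Complex.normSq_eq_conj_mul_self]
      exact_mod_cast this
    intro d
    have := (Finset.sum_eq_zero_iff_of_nonneg
      (fun d _ => Complex.normSq_nonneg (F (Y.head d) - F (Y.tail d)))).1 hcast d
      (Finset.mem_univ d)
    have h0 := Complex.normSq_eq_zero.1 this
    exact sub_eq_zero.1 h0
  -- F is constant on Y
  have hconst : ∀ a b : Y.V, F a = F b := by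
    intro a b
    have h := hYconn.2 a b
    induction h with
    | refl => rfl
    | tail _ hadj ih =>
        obtain ⟨d, hd1, hd2⟩ := hadj
        rw [ih, ← hd1, ← hd2, hreal d]
  -- nontrivial character kills F
  obtain ⟨σ0, hσ0⟩ : ∃ σ, χ σ ≠ 1 := by
    by_contra h
    push_neg at h
    exact hχ (MonoidHom.ext fun σ => (h σ).trans rfl)
  have hF0 : ∀ w : Y.V, F w = 0 := by
    intro w
    have h1 : F (C.actV σ0 w) = χ σ0 * F w := hFact σ0 w
    have h2 : F (C.actV σ0 w) = F w := hconst _ _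
    by_contra hFw
    exact hσ0 (mul_right_cancel₀ hFw (h1.symm.trans h2 |>.trans (one_mul (F w)).symm))
  obtain ⟨v, hv⟩ := Function.ne_iff.1 hf0
  exact hv (by rw [← hFs v, hF0]; rfl)

end GaloisCover

/-- For an abelian cover `Y/X` of multigraphs with
automorphism group `G` and any non-trivial character `χ` of `G`, the leading
Taylor coefficient of `L_{Y/X}(u,χ)⁻¹` at `u = 1` is
`L*_{Y/X}(1,χ) = (-2)^(r_X - 1) · det (D - A_χ)`. -/
theorem L_function_special_value (X Y : Multigraph)
    (hXconn : X.Connected) (hXdeg : X.NoDegreeOne)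
    (hYconn : Y.Connected) (hYdeg : Y.NoDegreeOne)
    {G : Type} [CommGroup G] [Fintype G] (C : GaloisCover Y X G)
    (s : X.V → Y.V) (hs : ∀ v, C.vmap (s v) = v)
    (χ : G →* ℂ) (hχ : χ ≠ 1) :
    leadingCoeffAtOne (C.LInv s χ) =
      (-2 : ℂ) ^ (X.r - 1) *
        Matrix.det (X.degMatrix.map (fun a => (a : ℂ)) - C.Achi s χ) := by
  classical
  set P : Polynomial ℂ :=
    Matrix.det
      ((1 : Matrix X.V X.V (Polynomial ℂ)) -
        (Polynomial.X : Polynomial ℂ) • (C.Achi s χ).map Polynomial.C +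
        ((Polynomial.X : Polynomial ℂ) ^ 2) •
          (X.degMatrix - 1).map fun a => (a : Polynomial ℂ)) with hP
  have hLinv : C.LInv s χ =
      (Polynomial.X - 1) ^ (X.r - 1) * ((-(1 + Polynomial.X)) ^ (X.r - 1) * P) := by
    rw [GaloisCover.LInv, ← hP,
      show (1 - Polynomial.X ^ 2 : Polynomial ℂ) =
        (Polynomial.X - 1) * (-(1 + Polynomial.X)) by ring,
      mul_pow, mul_assoc]
  have hP1 : P.eval 1 =
      Matrix.det (X.degMatrix.map (fun a => (a : ℂ)) - C.Achi s χ) := by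
    have hmap : P.eval 1 = (Polynomial.evalRingHom (1 : ℂ)) P := rfl
    rw [hmap, hP, RingHom.map_det]
    congr 1
    ext i j
    simp only [RingHom.mapMatrix_apply, Matrix.map_apply, Matrix.sub_apply, Matrix.add_apply,
      Matrix.smul_apply, Matrix.one_apply, smul_eq_mul, map_sub, map_add, map_mul, map_one,
      map_pow, Polynomial.eval_X, Polynomial.eval_one, Polynomial.coe_evalRingHom,
      Polynomial.eval_mul, Polynomial.eval_pow, Polynomial.eval_C, Polynomial.eval_add,
      Polynomial.eval_sub, Polynomial.eval_intCast, apply_ite, Polynomial.eval_zero]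
    push_cast
    split_ifs with h
    · ring
    · ring
  have hq1 : ((-(1 + Polynomial.X)) ^ (X.r - 1) * P).eval 1 =
      (-2 : ℂ) ^ (X.r - 1) *
        Matrix.det (X.degMatrix.map (fun a => (a : ℂ)) - C.Achi s χ) := by
    rw [Polynomial.eval_mul, Polynomial.eval_pow, hP1]
    norm_num
  have hne : ((-(1 + Polynomial.X)) ^ (X.r - 1) * P).eval 1 ≠ 0 := by
    rw [hq1]
    exact mul_ne_zero (pow_ne_zero _ (by norm_num))
      (C.det_sub_ne_zero hYconn s hs χ hχ)
  rw [hLinv, lcao_mul_pow _ _ hne, hq1]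
end

section
/- Let Y/X be an abelian cover of multigraphs with automorphism group G and covering map π. The map res: Div(Y) → Div(X), induced by w ↦ π(w), induces a surjective morphism of Z[G]-modules res: Jac(Y) → Jac(X) (with G acting trivially on Jac(X)). -/
section Aux

open Finset

namespace Multigraph

variable (Z : Multigraph)

lemma two_mul_numLoops (v : Z.V) : 2 * Z.numLoops v = Z.numDarts v v := by
  have hdvd : 2 ∣ Z.numDarts v v := by
    have h2 : ((Z.numDarts v v : ℕ) : ZMod 2) = 0 := by
      unfold numDarts
      rw [Finset.card_eq_sum_ones, Nat.cast_sum]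
      refine Finset.sum_involution (fun d _ => Z.inv d) ?_ ?_ ?_ ?_
      · intro a _; decide
      · intro a _ _; exact Z.inv_ne a
      · intro a ha
        simp only [Finset.mem_filter, Finset.mem_univ, true_and] at ha ⊢
        unfold tail at ha ⊢
        rw [Z.inv_inv]
        exact ⟨ha.2, ha.1⟩
      · intro a _; exact Z.inv_inv a
    exact (ZMod.natCast_eq_zero_iff _ 2).mp h2
  unfold numLoops
  omega

lemma rho_eq (w w0 : Z.V) :
    Z.rho w w0 = (if w = w0 then (Z.degree w0 : ℤ) else 0) - (Z.numDarts w w0 : ℤ) := by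
  unfold rho
  by_cases h : w = w0
  · subst h
    simp only [if_pos rfl]
    have := Z.two_mul_numLoops w
    push_cast
    omega
  · simp only [if_neg h]
    unfold numEdgesBetween
    ring

end Multigraph

namespace GaloisCover

variable {Y X : Multigraph} {G : Type} [CommGroup G] [Fintype G] (C : GaloisCover Y X G)

lemma tail_dmap (d : Y.D) : X.tail (C.dmap d) = C.vmap (Y.tail d) := by
  unfold Multigraph.tail
  rw [C.inv_map, C.head_map]

lemma degree_vmap (w0 : Y.V) : Y.degree w0 = X.degree (C.vmap w0) := by
  unfold Multigraph.degree
  refine Finset.card_bij (fun d _ => C.dmap d) ?_ ?_ ?_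
  · intro d hd
    simp only [Finset.mem_filter, Finset.mem_univ, true_and] at hd ⊢
    rw [C.head_map, hd]
  · intro a ha b hb hab
    simp only [Finset.mem_filter, Finset.mem_univ, true_and] at ha hb
    exact (C.star_bij w0).injOn ha hb hab
  · intro d' hd'
    simp only [Finset.mem_filter, Finset.mem_univ, true_and] at hd'
    obtain ⟨d, hd, rfl⟩ := (C.star_bij w0).surjOn hd'
    exact ⟨d, by simpa using hd, rfl⟩

lemma sum_numDarts_fiber (v : X.V) (w0 : Y.V) :
    ∑ w ∈ Finset.univ.filter (fun w => C.vmap w = v), Y.numDarts w w0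
      = X.numDarts v (C.vmap w0) := by
  have hcard : ∑ w ∈ Finset.univ.filter (fun w => C.vmap w = v), Y.numDarts w w0
      = (Finset.univ.filter
          (fun d : Y.D => Y.head d = w0 ∧ C.vmap (Y.tail d) = v)).card := by
    rw [Finset.card_eq_sum_card_fiberwise
      (s := Finset.univ.filter (fun d : Y.D => Y.head d = w0 ∧ C.vmap (Y.tail d) = v))
      (f := Y.tail) (t := Finset.univ.filter (fun w => C.vmap w = v))
      (fun d hd => by
        simp only [Finset.mem_coe, Finset.mem_filter, Finset.mem_univ, true_and] at hd ⊢
        exact hd.2)]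
    refine Finset.sum_congr rfl ?_
    intro w hw
    simp only [Finset.mem_filter, Finset.mem_univ, true_and] at hw
    unfold Multigraph.numDarts
    congr 1
    rw [Finset.filter_filter]
    apply Finset.filter_congr
    intro d _
    constructor
    · rintro ⟨h1, h2⟩
      exact ⟨⟨h2, by rw [h1]; exact hw⟩, h1⟩
    · rintro ⟨⟨h2, _⟩, h1⟩
      exact ⟨h1, h2⟩
  rw [hcard]
  unfold Multigraph.numDarts
  refine Finset.card_bij (fun d _ => C.dmap d) ?_ ?_ ?_
  · intro d hd
    simp only [Finset.mem_filter, Finset.mem_univ, true_and] at hd ⊢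
    rw [C.tail_dmap, C.head_map, hd.1]
    exact ⟨hd.2, rfl⟩
  · intro a ha b hb hab
    simp only [Finset.mem_filter, Finset.mem_univ, true_and] at ha hb
    exact (C.star_bij w0).injOn ha.1 hb.1 hab
  · intro d' hd'
    simp only [Finset.mem_filter, Finset.mem_univ, true_and] at hd'
    have hmem : d' ∈ {d : X.D | X.head d = C.vmap w0} := hd'.2
    obtain ⟨d, hd, rfl⟩ := (C.star_bij w0).surjOn hmem
    refine ⟨d, ?_, rfl⟩
    simp only [Finset.mem_filter, Finset.mem_univ, true_and]
    refine ⟨hd, ?_⟩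
    have := C.tail_dmap d
    rw [this] at hd'
    exact hd'.1.symm ▸ hd'.1

lemma res_lapDiv (w0 : Y.V) : C.res (Y.lapDiv w0) = X.lapDiv (C.vmap w0) := by
  ext v
  unfold res Multigraph.lapDiv
  rw [Finsupp.mapDomain_finset_sum]
  simp only [Finsupp.mapDomain_single, Finset.sum_apply', Finsupp.single_apply]
  have hR : ∑ v' : X.V, (if v' = v then X.rho v' (C.vmap w0) else 0)
      = X.rho v (C.vmap w0) := by
    rw [Finset.sum_ite_eq' Finset.univ v (fun v' => X.rho v' (C.vmap w0))]
    simp only [Finset.mem_univ, if_true]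
  rw [hR]
  have hL : ∀ w : Y.V, (if C.vmap w = v then Y.rho w w0 else 0)
      = (if C.vmap w = v then (if w = w0 then (Y.degree w0 : ℤ) else 0) else 0)
        - (if C.vmap w = v then (Y.numDarts w w0 : ℤ) else 0) := by
    intro w
    by_cases h : C.vmap w = v <;> simp [h, Y.rho_eq]
  rw [Finset.sum_congr rfl (fun w _ => hL w), Finset.sum_sub_distrib]
  have h1 : ∑ w : Y.V, (if C.vmap w = v then (if w = w0 then (Y.degree w0 : ℤ) else 0) else 0)
      = if v = C.vmap w0 then (X.degree (C.vmap w0) : ℤ) else 0 := by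
    have : ∀ w : Y.V, (if C.vmap w = v then (if w = w0 then (Y.degree w0 : ℤ) else 0) else 0)
        = (if w = w0 then (if v = C.vmap w0 then (X.degree (C.vmap w0) : ℤ) else 0) else 0) := by
      intro w
      rw [← C.degree_vmap w0]
      by_cases h : w = w0 <;> by_cases h2 : C.vmap w = v <;>
        simp_all [eq_comm (a := v)]
    rw [Finset.sum_congr rfl (fun w _ => this w)]
    rw [Finset.sum_ite_eq' Finset.univ w0]
    simp
  have h2 : ∑ w : Y.V, (if C.vmap w = v then (Y.numDarts w w0 : ℤ) else 0)
      = (X.numDarts v (C.vmap w0) : ℤ) := by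
    rw [← C.sum_numDarts_fiber v w0]
    rw [Finset.sum_filter]
    push_cast
    rfl
  rw [h1, h2, X.rho_eq]

lemma res_lap (M : Y.V →₀ ℤ) : C.res (Y.lap M) = X.lap (C.res M) := by
  have key : (Finsupp.lmapDomain ℤ ℤ C.vmap).comp Y.lap
      = X.lap.comp (Finsupp.lmapDomain ℤ ℤ C.vmap) := by
    apply Finsupp.lhom_ext
    intro w0 b
    simp only [LinearMap.comp_apply, Finsupp.lmapDomain_apply, Finsupp.mapDomain_single]
    unfold Multigraph.lap
    rw [Finsupp.lsum_single, Finsupp.lsum_single]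
    simp only [LinearMap.toSpanSingleton_apply]
    rw [Finsupp.mapDomain_smul]
    rw [show Finsupp.mapDomain C.vmap (Y.lapDiv w0) = X.lapDiv (C.vmap w0) from C.res_lapDiv w0]
  have := LinearMap.congr_fun key M
  simpa only [LinearMap.comp_apply, Finsupp.lmapDomain_apply, GaloisCover.res] using this

end GaloisCover

end Aux


/-- For an abelian cover `Y/X` with automorphism group `G`,
the map `res : Div(Y) → Div(X)` induces a surjective morphism of
`ℤ[G]`-modules `res : Jac(Y) → Jac(X)` (with `G` acting trivially on
`Jac(X)`): it maps principal divisors to principal divisors and degree-zero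
divisors to degree-zero divisors, it is `G`-equivariant, and every class of
`Jac(X)` is the image of a class of `Jac(Y)`. -/

theorem res_induces_surjection_on_jacobians (X Y : Multigraph)
    (hXconn : X.Connected) (hXdeg : X.NoDegreeOne)
    (hYconn : Y.Connected) (hYdeg : Y.NoDegreeOne)
    {G : Type} [CommGroup G] [Fintype G] (C : GaloisCover Y X G) :
    (∀ M : Y.V →₀ ℤ, ∃ N : X.V →₀ ℤ, C.res (Y.lap M) = X.lap N) ∧
    (∀ Dv : Y.V →₀ ℤ, Y.divDeg Dv = 0 → X.divDeg (C.res Dv) = 0) ∧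
    (∀ (σ : G) (Dv : Y.V →₀ ℤ),
      C.res (Finsupp.mapDomain (C.actV σ) Dv) = C.res Dv) ∧
    (∀ D' : X.V →₀ ℤ, X.divDeg D' = 0 →
      ∃ Dv : Y.V →₀ ℤ, Y.divDeg Dv = 0 ∧
        ∃ M : X.V →₀ ℤ, C.res Dv - D' = X.lap M) := by
  
  constructor
  · intro M
    exact ⟨C.res M, C.res_lap M⟩
  refine ⟨?_, ?_, ?_⟩
  · intro Dv h
    have : X.divDeg (C.res Dv) = Y.divDeg Dv := by
      unfold GaloisCover.res Multigraph.divDeg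
      simp only [Finsupp.lsum_apply, LinearMap.id_coe, id_eq]
      exact Finsupp.sum_mapDomain_index (fun _ => rfl) (fun _ _ _ => rfl)
    rw [this, h]
  · intro σ Dv
    unfold GaloisCover.res
    rw [← Finsupp.mapDomain_comp]
    congr 1
    funext w
    exact C.vmap_act σ w
  · intro D' hD'
    choose s hs using C.vmap_surj
    refine ⟨Finsupp.mapDomain s D', ?_, 0, ?_⟩
    · have : Y.divDeg (Finsupp.mapDomain s D') = X.divDeg D' := by
        unfold Multigraph.divDeg
        simp only [Finsupp.lsum_apply, LinearMap.id_coe, id_eq]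
        exact Finsupp.sum_mapDomain_index (fun _ => rfl) (fun _ _ _ => rfl)
      rw [this, hD']
    · have : C.res (Finsupp.mapDomain s D') = D' := by
        unfold GaloisCover.res
        rw [← Finsupp.mapDomain_comp]
        have : C.vmap ∘ s = id := funext hs
        rw [this, Finsupp.mapDomain_id]
      rw [this, sub_self, map_zero]
end
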